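/- Let P be a finite set of points in the Euclidean plane and let p, q, r be three points of sky(P) with x(p) < x(q) < x(r). Then d(q,r) < d(p,r). -/

import Mathlib

abbrev Pt : Type := EuclideanSpace ℝ (Fin 2)

open Classical in
noncomputable def sky (P : Finset Pt) : Finset Pt :=
  P.filter (fun p => ∀ q ∈ P, q ≠ p → q 0 < p 0 ∨ q 1 < p 1)

theorem stmt2 (P : Finset Pt) (p q r : Pt)
    (hp : p ∈ sky P) (hq : q ∈ sky P) (hr : r ∈ sky P)
    (hpq : p 0 < q 0) (hqr : q 0 < r 0) :
    dist q r < dist p r := by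
  simp only [sky, Finset.mem_filter] at hp hq hr
  have hqp : q ≠ p := fun h => absurd (congrArg (· 0) h) (ne_of_gt hpq)
  have hrq : r ≠ q := fun h => absurd (congrArg (· 0) h) (ne_of_gt hqr)
  have h1 : q 1 < p 1 := (hp.2 q hq.1 hqp).resolve_left (not_lt.2 hpq.le)
  have h2 : r 1 < q 1 := (hq.2 r hr.1 hrq).resolve_left (not_lt.2 hqr.le)
  rw [EuclideanSpace.dist_eq, EuclideanSpace.dist_eq]
  apply Real.sqrt_lt_sqrt
  · positivity
  · rw [Fin.sum_univ_two, Fin.sum_univ_two]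
    simp only [Real.dist_eq, sq_abs]
    nlinarith [sq_nonneg (q 0 - r 0), sq_nonneg (q 1 - r 1)]
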